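/- Let G₀ be an invertible symmetric 2×2 real matrix, let γ₀ be a symmetric 2×2 real matrix such that G := G₀ + 2·γ₀ is invertible, and set C = G·G₀⁻¹, I₁ = trace(C) − 2, I₂ = det(C) − 1. Let w : ℝ × ℝ → ℝ be differentiable at (I₁, I₂) with partial derivatives w₁ = ∂w/∂I₁ and w₂ = ∂w/∂I₂. Then the function γ ↦ w( trace((G₀+2γ)·G₀⁻¹) − 2 , det((G₀+2γ)·G₀⁻¹) − 1 ) is Fréchet differentiable at γ₀ with derivative K ↦ trace(Sᵀ·K), where S = 2·w₁·G₀⁻¹ + 2·w₂·det(C)·G⁻¹. That is, the second Piola–Kirchhoff stress tensor is S = 2(∂W/∂I₁)G₀⁻¹ + 2(∂W/∂I₂)det(C)·G⁻¹. -/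

import Mathlib

open Matrix

attribute [local instance] Matrix.normedAddCommGroup Matrix.normedSpace

/-- The second Piola–Kirchhoff stress tensor of an invariant-based energy
`W = w(I₁, I₂)`, with `I₁ = tr(C) − 2`, `I₂ = det(C) − 1`, `C = G·G₀⁻¹`, `G = G₀ + 2γ`:
the map `γ ↦ w(tr((G₀+2γ)G₀⁻¹) − 2, det((G₀+2γ)G₀⁻¹) − 1)` is Fréchet differentiable at
`γ₀` with gradient `S = 2·w₁·G₀⁻¹ + 2·w₂·det(C)·G⁻¹`. -/
theorem hasFDerivAt_invariant_energy
    (G₀ γ₀ : Matrix (Fin 2) (Fin 2) ℝ)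
    (hG₀ : IsUnit G₀.det) (hG₀s : G₀.IsSymm) (hγ₀s : γ₀.IsSymm)
    (hG : IsUnit (G₀ + (2 : ℝ) • γ₀).det)
    (w : ℝ × ℝ → ℝ) (w₁ w₂ : ℝ)
    (w' : ℝ × ℝ →L[ℝ] ℝ)
    (hw : HasFDerivAt w w'
      (((G₀ + (2 : ℝ) • γ₀) * G₀⁻¹).trace - 2, ((G₀ + (2 : ℝ) • γ₀) * G₀⁻¹).det - 1))
    (hw' : ∀ x y : ℝ, w' (x, y) = w₁ * x + w₂ * y) :
    ∃ S' : Matrix (Fin 2) (Fin 2) ℝ →L[ℝ] ℝ,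
      HasFDerivAt
        (fun γ : Matrix (Fin 2) (Fin 2) ℝ =>
          w (((G₀ + (2 : ℝ) • γ) * G₀⁻¹).trace - 2, ((G₀ + (2 : ℝ) • γ) * G₀⁻¹).det - 1))
        S' γ₀ ∧
      ∀ K : Matrix (Fin 2) (Fin 2) ℝ,
        S' K = (((2 * w₁) • G₀⁻¹ +
            (2 * w₂ * ((G₀ + (2 : ℝ) • γ₀) * G₀⁻¹).det) • (G₀ + (2 : ℝ) • γ₀)⁻¹)ᵀ *
          K).trace := by
  classical
  set Gm : Matrix (Fin 2) (Fin 2) ℝ := G₀ + (2 : ℝ) • γ₀ with hGm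
  set Gi : Matrix (Fin 2) (Fin 2) ℝ := G₀⁻¹ with hGi
  set A : Matrix (Fin 2) (Fin 2) ℝ := Gm * Gi with hAdef
  -- the derivative of the affine map γ ↦ (G₀ + 2γ)·G₀⁻¹
  set L : Matrix (Fin 2) (Fin 2) ℝ →L[ℝ] Matrix (Fin 2) (Fin 2) ℝ :=
    LinearMap.toContinuousLinearMap ((2 : ℝ) • LinearMap.mulRight ℝ Gi) with hLdef
  have hL : ∀ K, L K = (2 : ℝ) • (K * Gi) := fun K => rfl
  have hφ : HasFDerivAt (fun γ : Matrix (Fin 2) (Fin 2) ℝ => (G₀ + (2 : ℝ) • γ) * Gi) L γ₀ := by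
    have h1 : HasFDerivAt (fun γ : Matrix (Fin 2) (Fin 2) ℝ => G₀ * Gi + L γ) L γ₀ := by
      exact L.hasFDerivAt.const_add (G₀ * Gi)
    have : (fun γ : Matrix (Fin 2) (Fin 2) ℝ => (G₀ + (2 : ℝ) • γ) * Gi)
        = fun γ => G₀ * Gi + L γ := by
      funext γ
      rw [hL, Matrix.add_mul, Matrix.smul_mul]
    rw [this]
    exact h1
  -- entry maps
  set E : Fin 2 → Fin 2 → (Matrix (Fin 2) (Fin 2) ℝ →L[ℝ] ℝ) :=
    fun i j => LinearMap.toContinuousLinearMap (Matrix.entryLinearMap ℝ ℝ i j) with hEdef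
  have hEapp : ∀ i j M, E i j M = M i j := fun i j M => rfl
  have hE : ∀ i j, HasFDerivAt
      (fun γ : Matrix (Fin 2) (Fin 2) ℝ => ((G₀ + (2 : ℝ) • γ) * Gi) i j)
      ((E i j).comp L) γ₀ := fun i j => ((E i j).hasFDerivAt).comp γ₀ hφ
  -- trace and det parts
  have htr := (((hE 0 0).add (hE 1 1)).sub_const (2 : ℝ))
  have hdet := ((((hE 0 0).mul (hE 1 1)).sub ((hE 0 1).mul (hE 1 0))).sub_const (1 : ℝ))
  have hprod := HasFDerivAt.prodMk htr hdet
  rw [show A.trace = A 0 0 + A 1 1 from Matrix.trace_fin_two A,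
    show A.det = A 0 0 * A 1 1 - A 0 1 * A 1 0 from Matrix.det_fin_two A] at hw
  have hcomp := hw.comp γ₀ hprod
  refine ⟨w'.comp
      (((E 0 0).comp L + (E 1 1).comp L).prod
        (A 0 0 • (E 1 1).comp L + A 1 1 • (E 0 0).comp L -
          (A 0 1 • (E 1 0).comp L + A 1 0 • (E 0 1).comp L))), ?_, ?_⟩
  · simp only [Matrix.trace_fin_two, Matrix.det_fin_two]
    exact hcomp
  · intro K
    -- auxiliary matrix facts
    have hGdetunit : IsUnit A.det := by
      rw [hAdef, Matrix.det_mul]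
      exact hG.mul ((Matrix.isUnit_nonsing_inv_det_iff).2 hG₀)
    have hGiG : Gi * G₀ = 1 := Matrix.nonsing_inv_mul _ hG₀
    have hGiA : Gi * A⁻¹ = Gm⁻¹ := by
      rw [hAdef, Matrix.mul_inv_rev, ← Matrix.mul_assoc, hGi,
        Matrix.nonsing_inv_nonsing_inv _ hG₀, hGiG, Matrix.one_mul]
    have hadj : A.adjugate = A.det • A⁻¹ := by
      rw [Matrix.inv_def, smul_smul, Ring.mul_inverse_cancel _ hGdetunit, one_smul]
    have hGis : Giᵀ = Gi := by
      rw [hGi, Matrix.transpose_nonsing_inv, hG₀s.eq]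
    have hGms : Gmᵀ = Gm := by
      rw [hGm, Matrix.transpose_add, Matrix.transpose_smul, hG₀s.eq, hγ₀s.eq]
    have hGmis : (Gm⁻¹)ᵀ = Gm⁻¹ := by
      rw [Matrix.transpose_nonsing_inv, hGms]
    set P : Matrix (Fin 2) (Fin 2) ℝ := L K with hPdef
    -- the det-direction derivative equals trace (adjugate A * P)
    have key : A 0 0 * P 1 1 + A 1 1 * P 0 0 - (A 0 1 * P 1 0 + A 1 0 * P 0 1)
        = (A.adjugate * P).trace := by
      simp [Matrix.adjugate_fin_two, Matrix.trace_fin_two, Matrix.mul_apply,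
        Fin.sum_univ_two, Matrix.vecMul, dotProduct, Matrix.cons_val_zero,
        Matrix.cons_val_one, Matrix.head_cons]
      ring
    have key2 : (A.adjugate * P).trace = A.det * (2 * (Gm⁻¹ * K).trace) := by
      rw [hadj, Matrix.smul_mul, Matrix.trace_smul, smul_eq_mul]
      congr 1
      rw [hPdef, hL, Matrix.mul_smul, Matrix.trace_smul, smul_eq_mul]
      congr 1
      rw [← Matrix.mul_assoc, Matrix.trace_mul_cycle, Matrix.mul_assoc, ← Matrix.mul_assoc,
        hGiA]
    have hPtr : P 0 0 + P 1 1 = 2 * (Gi * K).trace := by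
      have : P.trace = 2 * (Gi * K).trace := by
        rw [hPdef, hL, Matrix.trace_smul, smul_eq_mul, Matrix.trace_mul_comm]
      simpa [Matrix.trace_fin_two] using this
    -- compute both sides
    show w' _ = _
    simp only [ContinuousLinearMap.prod_apply, ContinuousLinearMap.add_apply,
      ContinuousLinearMap.sub_apply, ContinuousLinearMap.smul_apply,
      ContinuousLinearMap.comp_apply, hw', hEapp, ← hPdef, smul_eq_mul]
    rw [Matrix.transpose_add, Matrix.transpose_smul, Matrix.transpose_smul, hGis, hGmis,
      Matrix.add_mul, Matrix.trace_add, Matrix.smul_mul, Matrix.smul_mul,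
      Matrix.trace_smul, Matrix.trace_smul, smul_eq_mul, smul_eq_mul]
    have hdetform : A 0 0 * A 1 1 - A 0 1 * A 1 0 = A.det := (Matrix.det_fin_two A).symm
    calc w₁ * (P 0 0 + P 1 1)
        + w₂ * (A 0 0 * P 1 1 + A 1 1 * P 0 0 - (A 0 1 * P 1 0 + A 1 0 * P 0 1))
        = w₁ * (2 * (Gi * K).trace) + w₂ * (A.det * (2 * (Gm⁻¹ * K).trace)) := by
          rw [hPtr, key, key2]
      _ = 2 * w₁ * (Gi * K).trace + 2 * w₂ * A.det * (Gm⁻¹ * K).trace := by ring
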